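/- Let N be a positive integer and a an integer with (N−2)/4 ≤ a ≤ (N−1)/2. Suppose f : ℤ/Nℤ → ℂ is nonzero, vanishes on the discrete interval [−a,a], and satisfies J f = λ f for some λ ∈ ℂ. Then the function g : ℤ/Nℤ → ℂ defined by g(x) = (F_N f)(x) for x ∈ [−a,a] and g(x) = 0 otherwise is nonzero and satisfies J g = λ g. Consequently, every eigenvalue of the restriction of J to L²([−a,a]') is an eigenvalue of the restriction of J to L²([−a,a]); every eigenvalue of J (on all of L²(ℤ/Nℤ)) has geometric multiplicity at most 2, and it has multiplicity exactly 2 if and only if it is an eigenvalue of the restriction of J to L²([−a,a]'). -/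

import Mathlib

open Complex

/-- The (non-normalized) discrete Fourier transform on `ZMod N`:
`(dft N f) k = ∑_{j=0}^{N-1} exp(-2πi j k / N) f(j)`. -/
noncomputable def dft (N : ℕ) (f : ZMod N → ℂ) : ZMod N → ℂ := fun k =>
  ∑ j ∈ Finset.range N,
    Complex.exp (-(2 * Real.pi * Complex.I * (j : ℂ) * (k.val : ℂ)) / (N : ℂ)) * f (j : ZMod N)

/-- The discrete interval `[-a, a]`, viewed as a subset of `ZMod N`. -/
def dInterval (N : ℕ) (a : ℤ) : Set (ZMod N) := {x | ∃ j : ℤ, |j| ≤ a ∧ (j : ZMod N) = x}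

/-- The discrete Fourier transform as a linear map. -/
noncomputable def dftL (N : ℕ) : (ZMod N → ℂ) →ₗ[ℂ] (ZMod N → ℂ) where
  toFun f := dft N f
  map_add' f g := by
    funext k
    simp only [dft, Pi.add_apply, mul_add]
    rw [Finset.sum_add_distrib]
  map_smul' c f := by
    funext k
    simp only [dft, Pi.smul_apply, smul_eq_mul, RingHom.id_apply]
    rw [Finset.mul_sum]
    exact Finset.sum_congr rfl fun j _ => by ring

/-- The subspace `L²(S)` of functions on `ZMod N` vanishing outside `S`. -/
noncomputable def supportedIn (N : ℕ) (S : Set (ZMod N)) : Submodule ℂ (ZMod N → ℂ) where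
  carrier := {f | ∀ x ∉ S, f x = 0}
  add_mem' := by
    intro f g hf hg x hx
    simp [hf x hx, hg x hx]
  zero_mem' := by
    intro x _
    rfl
  smul_mem' := by
    intro c f hf x hx
    simp [hf x hx]

/-- The space `C_a` of functions supported in `[-a,a]` whose Fourier transform is
also supported in `[-a,a]`. -/
noncomputable def Ca (N : ℕ) (a : ℤ) : Submodule ℂ (ZMod N → ℂ) :=
  supportedIn N (dInterval N a) ⊓ Submodule.comap (dftL N) (supportedIn N (dInterval N a))

/-- `A(x) = cos(π(2x+1)/N) − cos(π(2a+1)/N)`. -/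
noncomputable def acoef (N : ℕ) (a : ℤ) (x : ZMod N) : ℝ :=
  Real.cos (Real.pi * (2 * (x.val : ℝ) + 1) / N) - Real.cos (Real.pi * (2 * (a : ℝ) + 1) / N)

/-- `B(x) = −2 cos(π(2a+1)/N) cos(2πx/N)`. -/
noncomputable def bcoef (N : ℕ) (a : ℤ) (x : ZMod N) : ℝ :=
  -2 * Real.cos (Real.pi * (2 * (a : ℝ) + 1) / N) * Real.cos (2 * Real.pi * (x.val : ℝ) / N)

/-- The operator `J = J₁ − cos(π(2a+1)/N) J₀`:
`(J f)(x) = A(x) f(x+1) + B(x) f(x) + A(x−1) f(x−1)`. -/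
noncomputable def Jop (N : ℕ) (a : ℤ) (f : ZMod N → ℂ) : ZMod N → ℂ := fun x =>
  (acoef N a x : ℂ) * f (x + 1) + (bcoef N a x : ℂ) * f x + (acoef N a (x - 1) : ℂ) * f (x - 1)


/-- The operator `J` as a linear map. -/
noncomputable def JopL (N : ℕ) (a : ℤ) : (ZMod N → ℂ) →ₗ[ℂ] (ZMod N → ℂ) where
  toFun := Jop N a
  map_add' f g := by
    funext x
    simp only [Jop, Pi.add_apply]
    ring
  map_smul' c f := by
    funext x
    simp only [Jop, Pi.smul_apply, smul_eq_mul, RingHom.id_apply]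
    ring


namespace S7

variable (N : ℕ) (a : ℤ)

/-! ### The additive character `ee t = exp(2πi t/N)` -/

noncomputable def ee (t : ℤ) : ℂ := Complex.exp (2 * Real.pi * Complex.I * t / N)

noncomputable def qq : ℂ := Complex.exp (Real.pi * Complex.I / N)

lemma ee_add (s t : ℤ) : ee N (s + t) = ee N s * ee N t := by
  rw [ee, ee, ee, ← Complex.exp_add]; congr 1; push_cast; ring

lemma ee_zero : ee N 0 = 1 := by simp [ee]

lemma ee_ne_zero (t : ℤ) : ee N t ≠ 0 := Complex.exp_ne_zero _

lemma ee_neg (t : ℤ) : ee N (-t) = (ee N t)⁻¹ := by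
  refine eq_inv_of_mul_eq_one_left ?_
  rw [← ee_add]; simp [ee_zero]

lemma ee_int_mul (c t : ℤ) : ee N (c * t) = ee N c ^ t := by
  rw [ee, ee, ← Complex.exp_int_mul]; congr 1; push_cast; ring

lemma ee_congr (hN : 0 < N) {s t : ℤ} (h : (N : ℤ) ∣ s - t) : ee N s = ee N t := by
  obtain ⟨c, hc⟩ := h
  have hs : s = t + N * c := by linarith
  have h1 : ee N ((N : ℤ) * c) = 1 := by
    rw [ee, show (2 * (Real.pi:ℂ) * Complex.I * ((((N:ℤ) * c : ℤ)):ℂ)) / N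
        = c * (2 * Real.pi * Complex.I) by
      have hN' : (N : ℂ) ≠ 0 := by exact_mod_cast hN.ne'
      rw [div_eq_iff hN']; push_cast; ring]
    exact Complex.exp_int_mul_two_pi_mul_I c
  rw [hs, ee_add, h1, mul_one]

lemma zmodeq [NeZero N] (x : ZMod N) {r : ℤ} (h : (r : ZMod N) = x) :
    (x.val : ℤ) ≡ r [ZMOD N] := by
  rw [← ZMod.intCast_eq_intCast_iff]
  push_cast
  rw [ZMod.natCast_val, h]
  simp

lemma ee_congr' [NeZero N] {s t : ℤ} (h : s ≡ t [ZMOD (N:ℤ)]) : ee N s = ee N t :=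
  ee_congr N (Nat.pos_of_ne_zero (NeZero.ne N)) h.symm.dvd

lemma intCast_val_cast [NeZero N] (x : ZMod N) : ((x.val : ℤ) : ZMod N) = x := by
  push_cast; simp [ZMod.natCast_val]

lemma not_dvd {n k : ℤ} (hk : k ≠ 0) (habs : |k| < n) : ¬ n ∣ k := by
  intro h
  have h2 : n ∣ |k| := (dvd_abs n k).mpr h
  have := Int.le_of_dvd (abs_pos.mpr hk) h2
  omega

lemma ee_inj (hN : 0 < N) {s t : ℤ} (h : ee N s = ee N t) : (N:ℤ) ∣ s - t := by
  rw [ee, ee, Complex.exp_eq_exp_iff_exists_int] at h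
  obtain ⟨n, hn⟩ := h
  have hN' : (N:ℂ) ≠ 0 := by exact_mod_cast hN.ne'
  have hI := Complex.I_ne_zero
  have hπ : (Real.pi : ℂ) ≠ 0 := by exact_mod_cast Real.pi_ne_zero
  have hst : (s : ℂ) = t + n * N := by
    field_simp at hn
    have h2 : (2:ℂ) * Real.pi * Complex.I * s = 2 * Real.pi * Complex.I * (t + n * N) := by
      rw [hn]; ring
    exact mul_left_cancel₀ (by simp [hπ, hI] : (2:ℂ) * Real.pi * Complex.I ≠ 0) h2
  have hst' : s = t + n * N := by exact_mod_cast hst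
  exact ⟨n, by rw [hst']; ring⟩

/-! ### Rewriting the DFT via `ee` -/

lemma dft_apply_int [NeZero N] (f : ZMod N → ℂ) (t : ℤ) :
    dft N f ((t : ZMod N)) = ∑ m : ZMod N, ee N (-(m.val * t)) * f m := by
  have hN : 0 < N := Nat.pos_of_ne_zero (NeZero.ne N)
  rw [dft]
  refine Finset.sum_nbij' (fun j => ((j : ℕ) : ZMod N)) (fun m => m.val) ?_ ?_ ?_ ?_ ?_
  · intro j hj; exact Finset.mem_univ _
  · intro m hm; exact Finset.mem_range.mpr (ZMod.val_lt m)
  · intro j hj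
    exact ZMod.val_cast_of_lt (Finset.mem_range.mp hj)
  · intro m hm
    simp [ZMod.natCast_val, ZMod.intCast_zmod_cast]
  · intro j hj
    have hv : ((((j:ℕ) : ZMod N)).val : ℤ) ≡ (j : ℤ) [ZMOD N] := by
      have := ZMod.val_cast_of_lt (Finset.mem_range.mp hj)
      rw [this]
    have hvt : (((t : ZMod N)).val : ℤ) ≡ t [ZMOD N] := zmodeq N _ rfl
    have key : ee N (-((j : ℤ) * ((t : ZMod N)).val)) = ee N (-((((j:ℕ):ZMod N)).val * t)) := by
      apply ee_congr N hN
      have h2 : ((j:ℤ) * ((t : ZMod N)).val) ≡ ((((j:ℕ):ZMod N)).val * t) [ZMOD N] :=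
        Int.ModEq.mul hv.symm hvt
      exact (Int.ModEq.dvd (Int.ModEq.neg h2).symm)
    rw [← key, ee]
    congr 2
    push_cast
    ring

/-! ### cosine lemmas -/

lemma cos_congr (hN : 0 < N) {r s : ℤ} (h : (2*(N:ℤ)) ∣ (r - s)) :
    Real.cos (Real.pi * r / N) = Real.cos (Real.pi * s / N) := by
  obtain ⟨c, hc⟩ := h
  have hr : (r : ℝ) = s + 2*N*c := by
    have h' : r = s + 2*N*c := by linarith
    exact_mod_cast congrArg (Int.cast : ℤ → ℝ) h'
  have hN' : (N : ℝ) ≠ 0 := by exact_mod_cast hN.ne'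
  rw [hr, show Real.pi * ((s:ℝ) + 2*N*c) / N = Real.pi * s / N + c * (2 * Real.pi) by
    field_simp]
  exact Real.cos_add_int_mul_two_pi _ c

lemma cos_ofReal (x : ℝ) :
    (Real.cos x : ℂ) = (Complex.exp (x * Complex.I) + (Complex.exp (x * Complex.I))⁻¹)/2 := by
  rw [Complex.ofReal_cos, Complex.cos, ← Complex.exp_neg]
  ring_nf

lemma cosA_complex (r : ℤ) :
    ((Real.cos (Real.pi * (2*(r:ℝ)+1) / N) : ℂ)) = (ee N r * qq N + (ee N r * qq N)⁻¹)/2 := by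
  rw [cos_ofReal]
  have h' : Complex.exp ((((Real.pi * (2*(r:ℝ)+1) / N : ℝ)) : ℂ) * Complex.I)
      = ee N r * qq N := by
    rw [ee, qq, ← Complex.exp_add]
    congr 1
    push_cast
    ring
  rw [h']

lemma cosB_complex (r : ℤ) :
    ((Real.cos (2 * Real.pi * (r:ℝ) / N) : ℂ)) = (ee N r + (ee N r)⁻¹)/2 := by
  rw [cos_ofReal]
  have h' : Complex.exp ((((2 * Real.pi * (r:ℝ) / N : ℝ)) : ℂ) * Complex.I) = ee N r := by
    rw [ee]
    congr 1
    push_cast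
    ring
  rw [h']

lemma qq_sq : qq N * qq N = ee N 1 := by
  rw [qq, ee, ← Complex.exp_add]
  congr 1
  push_cast
  ring

lemma cosval_congr [NeZero N] (x : ZMod N) {r : ℤ} (hx : ((r:ZMod N)) = x) :
    Real.cos (Real.pi * (2 * (x.val : ℝ) + 1) / N)
      = Real.cos (Real.pi * (2 * (r : ℝ) + 1) / N) := by
  have hN : 0 < N := Nat.pos_of_ne_zero (NeZero.ne N)
  have h1 : (2 * (x.val : ℝ) + 1) = (((2 * (x.val : ℤ) + 1 : ℤ)) : ℝ) := by push_cast; ring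
  have h2 : (2 * (r : ℝ) + 1) = (((2 * r + 1 : ℤ)) : ℝ) := by push_cast; ring
  rw [h1, h2]
  apply cos_congr N hN
  obtain ⟨c, hc⟩ := (zmodeq N x hx).dvd
  exact ⟨-c, by linarith⟩

lemma acoef_complex [NeZero N] (x : ZMod N) {r : ℤ} (hx : ((r:ZMod N)) = x) :
    ((acoef N a x : ℝ) : ℂ) = (ee N r * qq N + (ee N r * qq N)⁻¹)/2
      - ((Real.cos (Real.pi * (2 * (a : ℝ) + 1) / N) : ℝ) : ℂ) := by
  rw [acoef, cosval_congr N x hx, Complex.ofReal_sub, cosA_complex]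

lemma bcoef_complex [NeZero N] (x : ZMod N) {r : ℤ} (hx : ((r:ZMod N)) = x) :
    ((bcoef N a x : ℝ) : ℂ) = -((Real.cos (Real.pi * (2 * (a : ℝ) + 1) / N) : ℝ) : ℂ)
      * (ee N r + (ee N r)⁻¹) := by
  have hN : 0 < N := Nat.pos_of_ne_zero (NeZero.ne N)
  have hval : Real.cos (2 * Real.pi * (x.val : ℝ) / N) = Real.cos (2 * Real.pi * (r : ℝ) / N) := by
    have h1 : ∀ s : ℤ, 2 * Real.pi * (s : ℝ) / N = Real.pi * ((2*s : ℤ) : ℝ) / N := by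
      intro s; push_cast; ring
    have h1' : 2 * Real.pi * (x.val : ℝ) / N = Real.pi * ((2*(x.val:ℤ) : ℤ) : ℝ) / N := by
      push_cast; ring
    rw [h1', h1 r]
    apply cos_congr N hN
    obtain ⟨c, hc⟩ := (zmodeq N x hx).dvd
    exact ⟨-c, by linarith⟩
  rw [bcoef, hval]
  rw [show ((((-2 : ℝ) * Real.cos (Real.pi * (2 * (a : ℝ) + 1) / N)
      * Real.cos (2 * Real.pi * (r:ℝ) / N) : ℝ)) : ℂ)
      = -2 * ((Real.cos (Real.pi * (2 * (a : ℝ) + 1) / N) : ℝ) : ℂ)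
        * ((Real.cos (2 * Real.pi * (r:ℝ) / N) : ℝ) : ℂ) by push_cast [-Complex.ofReal_cos]; ring]
  rw [cosB_complex]
  ring

/-! ### The commutation `J ∘ F = F ∘ J` -/

lemma jop_dft_comm [NeZero N] (f : ZMod N → ℂ) :
    Jop N a (dft N f) = dft N (Jop N a f) := by
  funext k
  set K : ℤ := (k.val : ℤ) with hKdef
  have hk : ((K : ℤ) : ZMod N) = k := intCast_val_cast N k
  have hR : dft N (Jop N a f) k = ∑ m : ZMod N, ee N (-(m.val * K)) * Jop N a f m := by
    rw [← hk, dft_apply_int]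
  have hsplit : ∑ m : ZMod N, ee N (-(m.val * K)) * Jop N a f m
      = (∑ m : ZMod N, ee N (-(m.val * K)) * (acoef N a m : ℂ) * f (m + 1))
      + (∑ m : ZMod N, ee N (-(m.val * K)) * (bcoef N a m : ℂ) * f m)
      + (∑ m : ZMod N, ee N (-(m.val * K)) * (acoef N a (m-1) : ℂ) * f (m - 1)) := by
    rw [← Finset.sum_add_distrib, ← Finset.sum_add_distrib]
    refine Finset.sum_congr rfl fun m _ => ?_
    simp only [Jop]; ring
  have h1 : (∑ m : ZMod N, ee N (-(m.val * K)) * (acoef N a m : ℂ) * f (m + 1))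
      = ∑ m : ZMod N, ee N (-(((m-1).val : ℤ) * K)) * (acoef N a (m-1) : ℂ) * f m := by
    rw [← Equiv.sum_comp (Equiv.addRight (1 : ZMod N))
      (fun m => ee N (-(((m-1).val : ℤ) * K)) * (acoef N a (m-1) : ℂ) * f m)]
    refine Finset.sum_congr rfl fun m _ => ?_
    simp [Equiv.coe_addRight, add_sub_cancel_right]
  have h3 : (∑ m : ZMod N, ee N (-(m.val * K)) * (acoef N a (m-1) : ℂ) * f (m - 1))
      = ∑ m : ZMod N, ee N (-(((m+1).val : ℤ) * K)) * (acoef N a m : ℂ) * f m := by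
    rw [← Equiv.sum_comp (Equiv.subRight (1 : ZMod N))
      (fun m => ee N (-(((m+1).val : ℤ) * K)) * (acoef N a m : ℂ) * f m)]
    refine Finset.sum_congr rfl fun m _ => ?_
    simp [Equiv.subRight_apply, sub_add_cancel]
  have hplus : k + 1 = ((K + 1 : ℤ) : ZMod N) := by push_cast [hk]; ring
  have hminus : k - 1 = ((K - 1 : ℤ) : ZMod N) := by push_cast [hk]; ring
  have hL : Jop N a (dft N f) k
      = (acoef N a k : ℂ) * (∑ m : ZMod N, ee N (-(m.val * (K+1))) * f m)
      + (bcoef N a k : ℂ) * (∑ m : ZMod N, ee N (-(m.val * K)) * f m)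
      + (acoef N a (k-1) : ℂ) * (∑ m : ZMod N, ee N (-(m.val * (K-1))) * f m) := by
    simp only [Jop]
    rw [hplus, hminus, ← hk, dft_apply_int, dft_apply_int, dft_apply_int]
  rw [hL, hR, hsplit, h1, h3, Finset.mul_sum, Finset.mul_sum, Finset.mul_sum,
    ← Finset.sum_add_distrib, ← Finset.sum_add_distrib,
    ← Finset.sum_add_distrib, ← Finset.sum_add_distrib]
  refine Finset.sum_congr rfl fun m _ => ?_
  set v : ℤ := (m.val : ℤ) with hvdef
  have hm : ((v : ℤ) : ZMod N) = m := intCast_val_cast N m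
  have hm1 : ((v - 1 : ℤ) : ZMod N) = m - 1 := by push_cast [hm]; ring
  have hm1' : ((v + 1 : ℤ) : ZMod N) = m + 1 := by push_cast [hm]; ring
  have e1 : ee N (-(((m-1).val : ℤ) * K)) = ee N (-(v*K)) * ee N K := by
    have h' : ee N (-(((m-1).val : ℤ) * K)) = ee N (-((v-1) * K)) :=
      ee_congr' N (((zmodeq N (m-1) hm1).mul_right K).neg)
    rw [h', show -((v-1)*K) = -(v*K) + K by ring, ee_add]
  have e3 : ee N (-(((m+1).val : ℤ) * K)) = ee N (-(v*K)) * (ee N K)⁻¹ := by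
    have h' : ee N (-(((m+1).val : ℤ) * K)) = ee N (-((v+1) * K)) :=
      ee_congr' N (((zmodeq N (m+1) hm1').mul_right K).neg)
    rw [h', show -((v+1)*K) = -(v*K) + -K by ring, ee_add, ee_neg, ee_neg]
  have e4 : ee N (-(v * (K+1))) = ee N (-(v*K)) * (ee N v)⁻¹ := by
    rw [show -(v*(K+1)) = -(v*K) + -v by ring, ee_add, ee_neg, ee_neg]
  have e5 : ee N (-(v * (K-1))) = ee N (-(v*K)) * ee N v := by
    rw [show -(v*(K-1)) = -(v*K) + v by ring, ee_add]
  have hqz : qq N ≠ 0 := Complex.exp_ne_zero _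
  have e6 : ee N (K - 1) * qq N = ee N K * (qq N)⁻¹ := by
    have h' : ee N (K - 1) = ee N K * (ee N 1)⁻¹ := by
      rw [show K - 1 = K + -1 by ring, ee_add, ee_neg]
    rw [h', ← qq_sq, mul_inv]
    field_simp
  have e7 : ee N (v - 1) * qq N = ee N v * (qq N)⁻¹ := by
    have h' : ee N (v - 1) = ee N v * (ee N 1)⁻¹ := by
      rw [show v - 1 = v + -1 by ring, ee_add, ee_neg]
    rw [h', ← qq_sq, mul_inv]
    field_simp
  rw [acoef_complex N a k hk, acoef_complex N a (k-1) (by rw [← hminus]),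
    acoef_complex N a m hm, acoef_complex N a (m-1) hm1,
    bcoef_complex N a k hk, bcoef_complex N a m hm,
    e1, e3, e4, e5, e6, e7]
  simp only [mul_inv, inv_inv]
  ring

/-! ### Interval and boundary lemmas -/

lemma mem_dInterval (m : ℤ) (hm : |m| ≤ a) : ((m : ZMod N)) ∈ dInterval N a := ⟨m, hm, rfl⟩

lemma boundary_plus {x : ZMod N} (hx : x ∈ dInterval N a) (hx1 : x + 1 ∉ dInterval N a) :
    x = ((a : ZMod N)) := by
  obtain ⟨j, hj, rfl⟩ := hx
  by_cases hja : j = a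
  · rw [hja]
  · exfalso
    apply hx1
    refine ⟨j + 1, ?_, by push_cast; ring⟩
    have := abs_le.mp hj
    rw [abs_le]
    omega

lemma boundary_minus {x : ZMod N} (hx : x ∈ dInterval N a) (hx1 : x - 1 ∉ dInterval N a) :
    x = (((-a : ℤ) : ZMod N)) := by
  obtain ⟨j, hj, rfl⟩ := hx
  by_cases hja : j = -a
  · rw [hja]
  · exfalso
    apply hx1
    refine ⟨j - 1, ?_, by push_cast; ring⟩
    have := abs_le.mp hj
    rw [abs_le]
    omega

lemma acoef_a [NeZero N] : acoef N a ((a : ZMod N)) = 0 := by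
  rw [acoef, cosval_congr N _ (by norm_cast), sub_self]

lemma acoef_nega [NeZero N] : acoef N a (((-a-1 : ℤ) : ZMod N)) = 0 := by
  rw [acoef, cosval_congr N (r := -a-1) _ rfl,
    show Real.pi * (2 * ((-a-1:ℤ) : ℝ) + 1) / N = -(Real.pi * (2 * (a:ℝ) + 1) / N) by
      push_cast; ring,
    Real.cos_neg, sub_self]

lemma acoef_ne [NeZero N] (m : ℤ) (hd1 : ¬ (N:ℤ) ∣ (m - a)) (hd2 : ¬ (N:ℤ) ∣ (m + a + 1)) :
    acoef N a ((m : ZMod N)) ≠ 0 := by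
  have hN : 0 < N := Nat.pos_of_ne_zero (NeZero.ne N)
  have hN' : (N:ℝ) ≠ 0 := by exact_mod_cast hN.ne'
  rw [acoef, cosval_congr N (r := m) _ rfl, Real.cos_sub_cos]
  intro h
  rcases mul_eq_zero.mp h with h' | hs2
  · rcases mul_eq_zero.mp h' with h'' | hs1
    · norm_num at h''
    · rw [show (Real.pi * (2*(m:ℝ)+1)/N + Real.pi * (2*(a:ℝ)+1)/N)/2
          = ((m + a + 1 : ℤ) : ℝ)/N * Real.pi by push_cast; field_simp; ring] at hs1
      rw [Real.sin_eq_zero_iff] at hs1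
      obtain ⟨n, hn⟩ := hs1
      apply hd2
      have hq1 : (n:ℝ) = ((m + a + 1 : ℤ) : ℝ)/N := mul_right_cancel₀ Real.pi_ne_zero hn
      have hq2 : ((m + a + 1 : ℤ) : ℝ) = (((N:ℤ) * n : ℤ) : ℝ) := by
        rw [eq_div_iff hN'] at hq1
        push_cast
        push_cast at hq1
        linarith
      exact ⟨n, by exact_mod_cast hq2⟩
  · rw [show (Real.pi * (2*(m:ℝ)+1)/N - Real.pi * (2*(a:ℝ)+1)/N)/2
        = ((m - a : ℤ) : ℝ)/N * Real.pi by push_cast; field_simp; ring] at hs2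
    rw [Real.sin_eq_zero_iff] at hs2
    obtain ⟨n, hn⟩ := hs2
    apply hd1
    have hq1 : (n:ℝ) = ((m - a : ℤ) : ℝ)/N := mul_right_cancel₀ Real.pi_ne_zero hn
    have hq2 : ((m - a : ℤ) : ℝ) = (((N:ℤ) * n : ℤ) : ℝ) := by
      rw [eq_div_iff hN'] at hq1
      push_cast
      push_cast at hq1
      linarith
    exact ⟨n, by exact_mod_cast hq2⟩

/-! ### The indicator of an eigenfunction is an eigenfunction -/

lemma indicator_eig [NeZero N] (f : ZMod N → ℂ) (lam : ℂ)
    (hf : ∀ x, Jop N a f x = lam * f x) (x : ZMod N) :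
    Jop N a ((dInterval N a).indicator f) x = lam * (dInterval N a).indicator f x := by
  classical
  set I := dInterval N a with hI
  by_cases hx : x ∈ I
  · rw [Set.indicator_of_mem hx]
    have e1 : (acoef N a x : ℂ) * I.indicator f (x+1) = (acoef N a x : ℂ) * f (x+1) := by
      by_cases hx1 : x + 1 ∈ I
      · rw [Set.indicator_of_mem hx1]
      · have hxa : x = ((a : ZMod N)) := boundary_plus N a hx hx1
        rw [hxa, acoef_a]
        simp
    have e3 : (acoef N a (x-1) : ℂ) * I.indicator f (x-1)
        = (acoef N a (x-1) : ℂ) * f (x-1) := by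
      by_cases hx1 : x - 1 ∈ I
      · rw [Set.indicator_of_mem hx1]
      · have hxa : x = (((-a : ℤ) : ZMod N)) := boundary_minus N a hx hx1
        have h' : x - 1 = (((-a-1 : ℤ) : ZMod N)) := by rw [hxa]; push_cast; ring
        rw [h', acoef_nega]
        simp
    rw [Jop, e1, e3, Set.indicator_of_mem hx, ← hf x, Jop]
  · rw [Set.indicator_of_notMem hx, mul_zero]
    have e1 : (acoef N a x : ℂ) * I.indicator f (x+1) = 0 := by
      by_cases hx1 : x + 1 ∈ I
      · have hb : x + 1 = (((-a : ℤ) : ZMod N)) :=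
          boundary_minus N a hx1 (by simpa using hx)
        have hx' : x = (((-a-1 : ℤ) : ZMod N)) := by
          have h' : x = (((-a : ℤ) : ZMod N)) - 1 := by rw [← hb]; ring
          rw [h']; push_cast; ring
        rw [hx', acoef_nega]
        simp
      · rw [Set.indicator_of_notMem hx1, mul_zero]
    have e2 : (bcoef N a x : ℂ) * I.indicator f x = 0 := by
      rw [Set.indicator_of_notMem hx, mul_zero]
    have e3 : (acoef N a (x-1) : ℂ) * I.indicator f (x-1) = 0 := by
      by_cases hx1 : x - 1 ∈ I
      · have hb : x - 1 = ((a : ZMod N)) :=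
          boundary_plus N a hx1 (by simpa using hx)
        rw [hb, acoef_a]
        simp
      · rw [Set.indicator_of_notMem hx1, mul_zero]
    rw [Jop, e1, e2, e3]
    ring

/-! ### Uniqueness of eigenvectors supported inside / outside the interval -/

lemma uniq_in [NeZero N] (hle : 2*a+1 ≤ (N:ℤ)) (f : ZMod N → ℂ) (lam : ℂ)
    (hf : ∀ x, Jop N a f x = lam * f x) (hsupp : ∀ x ∉ dInterval N a, f x = 0)
    (h0 : f (((-a : ℤ) : ZMod N)) = 0) : f = 0 := by
  have key : ∀ n : ℕ, ∀ j : ℤ, j = -a + n → j ≤ a → f ((j : ZMod N)) = 0 := by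
    intro n
    induction n using Nat.strong_induction_on with
    | _ n IH =>
      intro j hj hja
      rcases Nat.eq_zero_or_pos n with hn0 | hnpos
      · subst hn0
        simp only [Nat.cast_zero, add_zero] at hj
        rw [hj]; exact h0
      · have hrec := hf (((j - 1 : ℤ) : ZMod N))
        have hx1 : ((j - 1 : ℤ) : ZMod N) + 1 = ((j : ℤ) : ZMod N) := by push_cast; ring
        have hxm : ((j - 1 : ℤ) : ZMod N) - 1 = ((j - 2 : ℤ) : ZMod N) := by push_cast; ring
        have hfx : f (((j - 1 : ℤ) : ZMod N)) = 0 := by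
          apply IH (n-1) (by omega) (j-1) (by push_cast; omega) (by omega)
        have hterm3 : (acoef N a (((j - 1 : ℤ) : ZMod N) - 1) : ℂ)
            * f ((((j - 1 : ℤ) : ZMod N)) - 1) = 0 := by
          by_cases hn1 : n = 1
          · have h' : ((j - 1 : ℤ) : ZMod N) - 1 = (((-a-1 : ℤ)) : ZMod N) := by
              rw [hxm]; congr 1; omega
            rw [h', acoef_nega]
            simp
          · have h' : f ((((j - 1 : ℤ) : ZMod N)) - 1) = 0 := by
              rw [hxm]
              apply IH (n-2) (by omega) (j-2) (by push_cast; omega) (by omega)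
            rw [h', mul_zero]
        simp only [Jop] at hrec
        rw [hx1, hfx, hterm3] at hrec
        simp only [mul_zero, add_zero, zero_add] at hrec
        have hane : (acoef N a (((j - 1 : ℤ) : ZMod N)) : ℂ) ≠ 0 := by
          have h1' : ¬ (N:ℤ) ∣ ((j-1) - a) := by
            apply not_dvd (by omega)
            rw [abs_lt]; omega
          have h2' : ¬ (N:ℤ) ∣ ((j-1) + a + 1) := by
            apply not_dvd (by omega)
            rw [abs_lt]; omega
          exact_mod_cast Complex.ofReal_ne_zero.mpr (acoef_ne N a (j-1) h1' h2')
        exact (mul_eq_zero.mp hrec).resolve_left hane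
  funext x
  by_cases hx : x ∈ dInterval N a
  · obtain ⟨j, hj, rfl⟩ := hx
    have := abs_le.mp hj
    exact key (j + a).toNat j (by omega) (by omega)
  · exact hsupp x hx

lemma uniq_out [NeZero N] (ha : 0 ≤ a) (hle : 2*a+1 ≤ (N:ℤ)) (f : ZMod N → ℂ) (lam : ℂ)
    (hf : ∀ x, Jop N a f x = lam * f x) (hsupp : ∀ x ∈ dInterval N a, f x = 0)
    (h0 : f (((a + 1 : ℤ) : ZMod N)) = 0) : f = 0 := by
  have key : ∀ n : ℕ, ∀ j : ℤ, j = a + 1 + n → j ≤ (N:ℤ) - a - 1 → f ((j : ZMod N)) = 0 := by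
    intro n
    induction n using Nat.strong_induction_on with
    | _ n IH =>
      intro j hj hja
      rcases Nat.eq_zero_or_pos n with hn0 | hnpos
      · subst hn0
        simp only [Nat.cast_zero, add_zero] at hj
        rw [hj]; exact h0
      · have hrec := hf (((j - 1 : ℤ) : ZMod N))
        have hx1 : ((j - 1 : ℤ) : ZMod N) + 1 = ((j : ℤ) : ZMod N) := by push_cast; ring
        have hxm : ((j - 1 : ℤ) : ZMod N) - 1 = ((j - 2 : ℤ) : ZMod N) := by push_cast; ring
        have hfx : f (((j - 1 : ℤ) : ZMod N)) = 0 := by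
          apply IH (n-1) (by omega) (j-1) (by push_cast; omega) (by omega)
        have hterm3 : (acoef N a (((j - 1 : ℤ) : ZMod N) - 1) : ℂ)
            * f ((((j - 1 : ℤ) : ZMod N)) - 1) = 0 := by
          by_cases hn1 : n = 1
          · have h' : f ((((j - 1 : ℤ) : ZMod N)) - 1) = 0 := by
              rw [hxm]
              apply hsupp
              have hj2 : j - 2 = a := by omega
              rw [hj2]
              exact mem_dInterval N a a (by rw [_root_.abs_of_nonneg ha])
            rw [h', mul_zero]
          · have h' : f ((((j - 1 : ℤ) : ZMod N)) - 1) = 0 := by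
              rw [hxm]
              apply IH (n-2) (by omega) (j-2) (by push_cast; omega) (by omega)
            rw [h', mul_zero]
        simp only [Jop] at hrec
        rw [hx1, hfx, hterm3] at hrec
        simp only [mul_zero, add_zero, zero_add] at hrec
        have hane : (acoef N a (((j - 1 : ℤ) : ZMod N)) : ℂ) ≠ 0 := by
          have h1' : ¬ (N:ℤ) ∣ ((j-1) - a) := by
            apply not_dvd (by omega)
            rw [abs_lt]; omega
          have h2' : ¬ (N:ℤ) ∣ ((j-1) + a + 1) := by
            apply not_dvd (by omega)
            rw [abs_lt]; omega
          exact_mod_cast Complex.ofReal_ne_zero.mpr (acoef_ne N a (j-1) h1' h2')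
        exact (mul_eq_zero.mp hrec).resolve_left hane
  funext x
  by_cases hx : x ∈ dInterval N a
  · exact hsupp x hx
  · have hva : a < (x.val : ℤ) := by
      by_contra hcon
      push_neg at hcon
      apply hx
      rw [← intCast_val_cast N x]
      exact mem_dInterval N a _ (by rw [_root_.abs_of_nonneg (by positivity)]; omega)
    have hvb : (x.val : ℤ) < (N:ℤ) - a := by
      by_contra hcon
      push_neg at hcon
      apply hx
      have hcast : (((x.val : ℤ) - N : ℤ) : ZMod N) = x := by
        push_cast
        rw [ZMod.natCast_val, ZMod.natCast_self]
        simp [ZMod.intCast_cast]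
      rw [← hcast]
      refine mem_dInterval N a _ ?_
      have hvlt : (x.val : ℤ) < N := by exact_mod_cast ZMod.val_lt x
      rw [_root_.abs_of_nonpos (by omega)]
      omega
    have hcast : (((x.val : ℤ)) : ZMod N) = x := intCast_val_cast N x
    rw [← hcast]
    exact key ((x.val : ℤ) - (a+1)).toNat _ (by omega) (by omega)

/-! ### The Vandermonde / uncertainty lemma -/

lemma dft_vanish [NeZero N] (ha : 0 ≤ a) (hle : 2*a+1 ≤ (N:ℤ)) (hge : (N:ℤ) ≤ 4*a+2)
    (f : ZMod N → ℂ) (hsupp : ∀ y ∈ dInterval N a, f y = 0)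
    (hvan : ∀ k ∈ dInterval N a, dft N f k = 0) : f = 0 := by
  classical
  have hN : 0 < N := Nat.pos_of_ne_zero (NeZero.ne N)
  set S : Finset (ZMod N) := Finset.univ.filter (fun x => x ∉ dInterval N a) with hS
  have hcard : (S.card : ℤ) ≤ 2*a + 1 := by
    have himg : (Finset.Icc (-a) a).image (fun j : ℤ => ((j : ZMod N)))
        ⊆ Finset.univ.filter (fun x => x ∈ dInterval N a) := by
      intro x hx
      obtain ⟨j, hj, rfl⟩ := Finset.mem_image.mp hx
      rw [Finset.mem_Icc] at hj
      exact Finset.mem_filter.mpr ⟨Finset.mem_univ _, mem_dInterval N a j (abs_le.mpr hj)⟩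
    have hinj : Set.InjOn (fun j : ℤ => ((j : ZMod N))) (Finset.Icc (-a) a) := by
      intro j hj j' hj' hjj
      rw [Finset.coe_Icc, Set.mem_Icc] at hj hj'
      have hd : (N:ℤ) ∣ j - j' := Int.ModEq.dvd ((ZMod.intCast_eq_intCast_iff _ _ _).mp hjj).symm
      by_contra hne
      exact not_dvd (by omega) (by rw [abs_lt]; omega) hd
    have hcardimg : ((Finset.Icc (-a) a).image (fun j : ℤ => ((j : ZMod N)))).card
        = (2*a+1).toNat := by
      rw [Finset.card_image_of_injOn hinj, Int.card_Icc]
      congr 1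
      omega
    have hcle := Finset.card_le_card himg
    have hsplit := Finset.card_filter_add_card_filter_not
      (s := (Finset.univ : Finset (ZMod N))) (p := fun x => x ∈ dInterval N a)
    rw [Finset.card_univ, ZMod.card] at hsplit
    have hbridge : (Finset.filter (fun x => ¬ x ∈ dInterval N a) Finset.univ).card = S.card := rfl
    have hile : (2*a+1).toNat ≤ (Finset.univ.filter (fun x => x ∈ dInterval N a)).card := by
      rw [← hcardimg]; exact hcle
    omega
  have heq : ∀ i : ℕ, (i : ℤ) < S.card →
      ∑ m ∈ S, (ee N (m.val * a) * f m) * (ee N (-(m.val : ℤ)))^i = 0 := by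
    intro i hi
    have hti : |(-a + i : ℤ)| ≤ a := by rw [abs_le]; omega
    have h0 := hvan _ (mem_dInterval N a (-a + i) hti)
    rw [dft_apply_int] at h0
    have hres : ∑ m ∈ S, ee N (-(m.val * (-a + i))) * f m
        = ∑ m : ZMod N, ee N (-(m.val * (-a + i))) * f m := by
      apply Finset.sum_subset (Finset.subset_univ S)
      intro m _ hm
      have hmI : m ∈ dInterval N a := by
        by_contra hcon
        exact hm (Finset.mem_filter.mpr ⟨Finset.mem_univ _, hcon⟩)
      rw [hsupp m hmI, mul_zero]
    rw [← hres] at h0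
    rw [← h0]
    refine Finset.sum_congr rfl fun m _ => ?_
    have hterm : ee N (-((m.val : ℤ) * (-a + i)))
        = ee N ((m.val:ℤ)*a) * ee N (-(m.val:ℤ))^(i:ℕ) := by
      rw [show -((m.val : ℤ) * (-a + i)) = (m.val : ℤ) * a + (-(m.val:ℤ)) * (i:ℤ) by ring,
        ee_add]
      congr 1
      rw [ee_int_mul, zpow_natCast]
    rw [hterm]
    ring
  set s := S.card with hs
  let eqv : Fin s ≃ {x // x ∈ S} := S.equivFin.symm
  have hzero : (fun j : Fin s => ee N (((eqv j : ZMod N)).val * a) * f ((eqv j : ZMod N))) = 0 := by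
    apply Matrix.eq_zero_of_forall_pow_sum_mul_pow_eq_zero
      (f := fun j : Fin s => ee N (-(((eqv j : ZMod N)).val : ℤ)))
    · intro j j' hjj
      have hd := ee_inj N hN hjj
      have hv1 : ((eqv j : ZMod N)).val < N := ZMod.val_lt _
      have hv2 : ((eqv j' : ZMod N)).val < N := ZMod.val_lt _
      have hveq : ((eqv j : ZMod N)).val = ((eqv j' : ZMod N)).val := by
        by_contra hne
        exact not_dvd (by omega) (by rw [abs_lt]; omega) hd
      have hval : ((eqv j : ZMod N)) = ((eqv j' : ZMod N)) := ZMod.val_injective N hveq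
      exact eqv.injective (Subtype.ext hval)
    · intro i
      have h := heq (i : ℕ) (by exact_mod_cast i.2)
      rw [← h, ← Finset.sum_coe_sort S
        (fun m => (ee N (m.val * a) * f m) * (ee N (-(m.val : ℤ)))^(i:ℕ))]
      exact Equiv.sum_comp eqv (fun u => (ee N (((u : ZMod N)).val * a) * f ((u : ZMod N)))
        * (ee N (-(((u : ZMod N)).val : ℤ)))^(i:ℕ))
  funext x
  by_cases hx : x ∈ dInterval N a
  · exact hsupp x hx
  · have hxS : x ∈ S := Finset.mem_filter.mpr ⟨Finset.mem_univ _, hx⟩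
    have h' := congrFun hzero (eqv.symm ⟨x, hxS⟩)
    simp only [Equiv.apply_symm_apply, Pi.zero_apply] at h'
    rcases mul_eq_zero.mp h' with h'' | h''
    · exact absurd h'' (ee_ne_zero N _)
    · exact h''

end S7

lemma mem_supportedIn {N : ℕ} {S : Set (ZMod N)} {f : ZMod N → ℂ} :
    f ∈ supportedIn N S ↔ ∀ x ∉ S, f x = 0 := Iff.rfl

theorem statement7 (N : ℕ) (hN : 0 < N) (a : ℤ) (h2 : (N : ℤ) ≤ 4 * a + 2)
    (h1 : 2 * a + 1 ≤ (N : ℤ)) :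
    (∀ (f : ZMod N → ℂ) (lam : ℂ), f ≠ 0 → (∀ y ∈ dInterval N a, f y = 0) →
      JopL N a f = lam • f →
        (dInterval N a).indicator (dft N f) ≠ 0 ∧
        JopL N a ((dInterval N a).indicator (dft N f))
          = lam • (dInterval N a).indicator (dft N f)) ∧
    (∀ lam : ℂ,
      (∃ f : ZMod N → ℂ, f ≠ 0 ∧ (∀ y ∈ dInterval N a, f y = 0) ∧ JopL N a f = lam • f) →
      (∃ g : ZMod N → ℂ, g ≠ 0 ∧ (∀ y ∉ dInterval N a, g y = 0) ∧ JopL N a g = lam • g)) ∧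
    (∀ lam : ℂ,
      Module.finrank ℂ ↥(Module.End.eigenspace (JopL N a) lam) ≤ 2 ∧
      (Module.finrank ℂ ↥(Module.End.eigenspace (JopL N a) lam) = 2 ↔
        ∃ f : ZMod N → ℂ, f ≠ 0 ∧ (∀ y ∈ dInterval N a, f y = 0) ∧
          JopL N a f = lam • f)) := by
  haveI : NeZero N := ⟨hN.ne'⟩
  have ha : 0 ≤ a := by omega
  have hJopL : ∀ g : ZMod N → ℂ, JopL N a g = Jop N a g := fun g => rfl
  -- Part 1
  have part1 : ∀ (f : ZMod N → ℂ) (lam : ℂ), f ≠ 0 → (∀ y ∈ dInterval N a, f y = 0) →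
      JopL N a f = lam • f →
      (dInterval N a).indicator (dft N f) ≠ 0 ∧
      JopL N a ((dInterval N a).indicator (dft N f))
        = lam • (dInterval N a).indicator (dft N f) := by
    intro f lam hf0 hvan heig
    have hptw : ∀ x, Jop N a f x = lam * f x := fun x => congrFun heig x
    constructor
    · intro hg0
      apply hf0
      apply S7.dft_vanish N a ha h1 h2 f hvan
      intro k hk
      have h' := congrFun hg0 k
      rwa [Set.indicator_of_mem hk] at h'
    · have hcomm : Jop N a (dft N f) = dft N (Jop N a f) := S7.jop_dft_comm N a f
      have hsmul : dft N (lam • f) = lam • dft N f := map_smul (dftL N) lam f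
      have hD : ∀ x, Jop N a (dft N f) x = lam * dft N f x := by
        intro x
        rw [hcomm]
        have h' : Jop N a f = lam • f := heig
        rw [h', hsmul]
        rfl
      funext x
      exact S7.indicator_eig N a (dft N f) lam hD x
  refine ⟨part1, ?_, ?_⟩
  · -- Part 2
    rintro lam ⟨f, hf, hvan, heig⟩
    obtain ⟨hg0, hgeig⟩ := part1 f lam hf hvan heig
    exact ⟨(dInterval N a).indicator (dft N f), hg0,
      fun y hy => Set.indicator_of_notMem hy _, hgeig⟩
  · -- Part 3
    intro lam
    set E := Module.End.eigenspace (JopL N a) lam with hE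
    set E1 := supportedIn N (dInterval N a) ⊓ E with hE1
    set E2 := supportedIn N ((dInterval N a)ᶜ) ⊓ E with hE2
    have hmemE : ∀ f : ZMod N → ℂ, f ∈ E ↔ JopL N a f = lam • f := fun f =>
      Module.End.mem_eigenspace_iff
    -- finrank E1 ≤ 1
    have hφ1 : Module.finrank ℂ E1 ≤ 1 := by
      let φ : E1 →ₗ[ℂ] ℂ :=
        { toFun := fun g => (g : ZMod N → ℂ) (((-a : ℤ) : ZMod N))
          map_add' := fun _ _ => rfl
          map_smul' := fun _ _ => rfl }
      have hinj : Function.Injective φ := by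
        rw [← LinearMap.ker_eq_bot, Submodule.eq_bot_iff]
        rintro ⟨g, hg⟩ hgk
        have hgE : g ∈ E := hg.2
        have hgs : ∀ x ∉ dInterval N a, g x = 0 := hg.1
        have hptw : ∀ x, Jop N a g x = lam * g x := fun x =>
          congrFun ((hmemE g).mp hgE) x
        have : g = 0 := S7.uniq_in N a h1 g lam hptw hgs hgk
        exact Subtype.ext this
      calc Module.finrank ℂ E1 ≤ Module.finrank ℂ ℂ :=
            LinearMap.finrank_le_finrank_of_injective hinj
        _ = 1 := Module.finrank_self ℂ
    -- finrank E2 ≤ 1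
    have hφ2 : Module.finrank ℂ E2 ≤ 1 := by
      let φ : E2 →ₗ[ℂ] ℂ :=
        { toFun := fun g => (g : ZMod N → ℂ) (((a + 1 : ℤ) : ZMod N))
          map_add' := fun _ _ => rfl
          map_smul' := fun _ _ => rfl }
      have hinj : Function.Injective φ := by
        rw [← LinearMap.ker_eq_bot, Submodule.eq_bot_iff]
        rintro ⟨g, hg⟩ hgk
        have hgE : g ∈ E := hg.2
        have hgs : ∀ x ∈ dInterval N a, g x = 0 := by
          intro x hx
          exact hg.1 x (by simp [Set.mem_compl_iff, hx])
        have hptw : ∀ x, Jop N a g x = lam * g x := fun x =>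
          congrFun ((hmemE g).mp hgE) x
        have : g = 0 := S7.uniq_out N a ha h1 g lam hptw hgs hgk
        exact Subtype.ext this
      calc Module.finrank ℂ E2 ≤ Module.finrank ℂ ℂ :=
            LinearMap.finrank_le_finrank_of_injective hinj
        _ = 1 := Module.finrank_self ℂ
    -- decomposition E = E1 ⊔ E2
    have hEsup : E = E1 ⊔ E2 := by
      apply le_antisymm
      · intro f hf
        have hptw : ∀ x, Jop N a f x = lam * f x := fun x =>
          congrFun ((hmemE f).mp hf) x
        have huE : (dInterval N a).indicator f ∈ E := by
          rw [hmemE]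
          funext x
          exact S7.indicator_eig N a f lam hptw x
        have hu1 : (dInterval N a).indicator f ∈ E1 := by
          refine Submodule.mem_inf.mpr ⟨?_, huE⟩
          intro x hx
          exact Set.indicator_of_notMem hx f
        have hv2 : f - (dInterval N a).indicator f ∈ E2 := by
          refine Submodule.mem_inf.mpr ⟨?_, sub_mem hf huE⟩
          intro x hx
          have hxI : x ∈ dInterval N a := by
            by_contra hcon
            exact hx (Set.mem_compl hcon)
          simp [Set.indicator_of_mem hxI]
        exact Submodule.mem_sup.mpr ⟨(dInterval N a).indicator f, hu1,
          f - (dInterval N a).indicator f, hv2, by ring⟩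
      · exact sup_le inf_le_right inf_le_right
    have hdisj : E1 ⊓ E2 = ⊥ := by
      rw [Submodule.eq_bot_iff]
      intro f hf
      have hf1 : ∀ x ∉ dInterval N a, f x = 0 := (Submodule.mem_inf.mp hf).1.1
      have hf2 : ∀ x ∉ (dInterval N a)ᶜ, f x = 0 := (Submodule.mem_inf.mp hf).2.1
      funext x
      by_cases hx : x ∈ dInterval N a
      · exact hf2 x (by simp [Set.mem_compl_iff, hx])
      · exact hf1 x hx
    have hsum := Submodule.finrank_sup_add_finrank_inf_eq E1 E2
    rw [hdisj, finrank_bot, add_zero, ← hEsup] at hsum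
    constructor
    · omega
    · constructor
      · intro hrank
        have hr2 : Module.finrank ℂ E2 = 1 := by omega
        have hne : E2 ≠ ⊥ := by
          intro hbot
          rw [hbot, finrank_bot] at hr2
          omega
        obtain ⟨f, hfmem, hf0⟩ := (Submodule.ne_bot_iff E2).mp hne
        refine ⟨f, hf0, ?_, (hmemE f).mp (Submodule.mem_inf.mp hfmem).2⟩
        intro y hy
        exact (Submodule.mem_inf.mp hfmem).1 y (by simp [Set.mem_compl_iff, hy])
      · rintro ⟨f, hf0, hvan, heig⟩
        have hfE2 : f ∈ E2 := by
          refine Submodule.mem_inf.mpr ⟨?_, (hmemE f).mpr heig⟩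
          intro x hx
          exact hvan x (by simpa [Set.mem_compl_iff, not_not] using hx)
        have hr2 : Module.finrank ℂ E2 = 1 := by
          have hne : Module.finrank ℂ E2 ≠ 0 := by
            intro h0
            have hbot : E2 = ⊥ := Submodule.finrank_eq_zero.mp h0
            rw [hbot, Submodule.mem_bot] at hfE2
            exact hf0 hfE2
          omega
        obtain ⟨hg0, hgeig⟩ := part1 f lam hf0 hvan heig
        have hgE1 : (dInterval N a).indicator (dft N f) ∈ E1 := by
          refine Submodule.mem_inf.mpr ⟨?_, (hmemE _).mpr hgeig⟩
          intro x hx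
          exact Set.indicator_of_notMem hx _
        have hr1 : Module.finrank ℂ E1 = 1 := by
          have hne : Module.finrank ℂ E1 ≠ 0 := by
            intro h0
            have hbot : E1 = ⊥ := Submodule.finrank_eq_zero.mp h0
            rw [hbot, Submodule.mem_bot] at hgE1
            exact hg0 hgE1
          omega
        omega
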